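/- Let f_n, g_n, h_n, a0_n, a1_n, a2_n (n ∈ ℤ) be real-valued differentiable functions of x ∈ ℝ satisfying for all n ∈ ℤ and all x: (d/dx) f_n = f_n·a0_{n+1} − f_n·a0_n + g_n·f_n − g_{n+1}·f_n; (d/dx) a0_n = f_n·a1_{n+1} − f_{n−1}·a1_n + h_n·f_{n−1} − h_{n+1}·f_n; and (d/dx) a1_n = f_n·a2_{n+1} − f_{n−2}·a2_n + g_n·a1_n − g_{n−1}·a1_n + h_n·a0_{n−1} − h_n·a0_n. Define σ_n := f_{n−1}·(a1_n − h_n). Then for all n and x: (d/dx)[h_n·f_{n−1} + (1/2)(a0_n)² + σ_n] = [f_n·f_{n−1}·a2_{n+1} + σ_{n+1}·a0_n] − [f_{n−1}·f_{n−2}·a2_n + σ_n·a0_{n−1}]. -/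
import Mathlib

/-- the third integrability condition (conservation law for
`ρ⁽²⁾ = h f₋₁ + ½ (a⁰)² + σ`) follows from the equations for the coefficients
of a formal symmetry of a Volterra-type lattice. -/
theorem formal_symmetry_third_conservation_law
    (f g h a0 a1 a2 : ℤ → ℝ → ℝ)
    (hf : ∀ n, Differentiable ℝ (f n)) (hg : ∀ n, Differentiable ℝ (g n))
    (hh : ∀ n, Differentiable ℝ (h n)) (ha0 : ∀ n, Differentiable ℝ (a0 n))
    (ha1 : ∀ n, Differentiable ℝ (a1 n)) (ha2 : ∀ n, Differentiable ℝ (a2 n))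
    (eq1 : ∀ n x, deriv (f n) x =
      f n x * a0 (n+1) x - f n x * a0 n x + g n x * f n x - g (n+1) x * f n x)
    (eq2 : ∀ n x, deriv (a0 n) x =
      f n x * a1 (n+1) x - f (n-1) x * a1 n x
        + h n x * f (n-1) x - h (n+1) x * f n x)
    (eq3 : ∀ n x, deriv (a1 n) x =
      f n x * a2 (n+1) x - f (n-2) x * a2 n x
        + g n x * a1 n x - g (n-1) x * a1 n x
        + h n x * a0 (n-1) x - h n x * a0 n x)
    (σ : ℤ → ℝ → ℝ)
    (hσ : ∀ n x, σ n x = f (n-1) x * (a1 n x - h n x)) :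
    ∀ n x, deriv (fun t => h n t * f (n-1) t + (1/2) * (a0 n t)^2 + σ n t) x =
      (f n x * f (n-1) x * a2 (n+1) x + σ (n+1) x * a0 n x)
        - (f (n-1) x * f (n-2) x * a2 n x + σ n x * a0 (n-1) x) := by
  intro n x
  have key : (fun t => h n t * f (n-1) t + (1/2) * (a0 n t)^2 + σ n t)
      = fun t => f (n-1) t * a1 n t + (1/2) * (a0 n t)^2 := by
    funext t; rw [hσ]; ring
  have H : HasDerivAt (fun t => f (n-1) t * a1 n t + (1/2) * (a0 n t)^2)
      ((deriv (f (n-1)) x * a1 n x + f (n-1) x * deriv (a1 n) x)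
        + (1/2) * ((2 : ℕ) * a0 n x ^ (2-1) * deriv (a0 n) x)) x :=
    (((hf (n-1) x).hasDerivAt.mul ((ha1 n) x).hasDerivAt).add
     ((((ha0 n) x).hasDerivAt.pow 2).const_mul (1/2)))
  rw [key, H.deriv, eq1 (n-1), eq2 n, eq3 n, hσ (n+1), hσ n]
  simp only [show n-1+1 = n from by ring, show n+1-1 = n from by ring]
  push_cast
  ring
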